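/- Trace inequality for second-order perturbations: let H(ω) be a real-analytic family of self-adjoint operators on a finite-dimensional Hilbert space depending on a real parameter ω, with analytically chosen eigenvalues λ_ℓ(ω). Let F be a nondecreasing nonnegative function (e.g. F(x) = ∫_{−∞}^x χ(t)dt for a nonnegative bump χ). Then Tr( (∂²_ω H) F(H) ) ≤ Σ_ℓ (∂²_ω λ_ℓ) F(λ_ℓ). -/

import Mathlib

open Matrix

lemma stmt17_alg (n : ℕ) (L Ld : Fin n → ℝ) (F : ℝ → ℝ) (hF : Monotone F)
    (c M : Fin n → Fin n → ℂ)
    (ha : ∀ k ℓ, star (c ℓ k) = - c k ℓ)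
    (hb : ∀ k ℓ, M k ℓ = (if k = ℓ then ((Ld ℓ : ℝ) : ℂ) else 0)
        + (((L ℓ : ℝ) : ℂ) - ((L k : ℝ) : ℂ)) * c k ℓ) :
    0 ≤ (∑ ℓ, ((F (L ℓ) : ℝ) : ℂ) *
        ∑ k, (star (c k ℓ) * M k ℓ + c k ℓ * M ℓ k)).re := by
  have key : ∀ k ℓ, star (c k ℓ) * M k ℓ + c k ℓ * M ℓ k
      = ((((L ℓ - L k) * (2 * Complex.normSq (c k ℓ))) : ℝ) : ℂ) := by
    intro k ℓ
    have hc : c ℓ k = - star (c k ℓ) := by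
      have := congrArg star (ha k ℓ)
      simpa using this
    have hns : star (c k ℓ) * c k ℓ = (Complex.normSq (c k ℓ) : ℂ) := by
      rw [Complex.star_def, mul_comm, Complex.mul_conj]
    rw [hb k ℓ, hb ℓ k, hc]
    by_cases h : k = ℓ
    · subst h
      have h0 : star (c k k) = - c k k := ha k k
      simp only [if_pos rfl, sub_self, zero_mul, add_zero, mul_zero]
      rw [h0]
      push_cast
      ring
    · simp only [if_neg h, if_neg (Ne.symm h)]
      have : star (c k ℓ) * (0 + (((L ℓ : ℝ):ℂ) - ((L k:ℝ):ℂ)) * c k ℓ)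
          + c k ℓ * (0 + (((L k:ℝ):ℂ) - ((L ℓ:ℝ):ℂ)) * (- star (c k ℓ)))
          = (((L ℓ:ℝ):ℂ) - ((L k:ℝ):ℂ)) * (2 * (star (c k ℓ) * c k ℓ)) := by ring
      rw [this, hns]
      push_cast
      ring
  -- rewrite whole sum as real
  have hsum : (∑ ℓ, ((F (L ℓ) : ℝ) : ℂ) *
        ∑ k, (star (c k ℓ) * M k ℓ + c k ℓ * M ℓ k)).re
      = ∑ ℓ, ∑ k, F (L ℓ) * ((L ℓ - L k) * (2 * Complex.normSq (c k ℓ))) := by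
    rw [Complex.re_sum]
    refine Finset.sum_congr rfl fun ℓ _ => ?_
    rw [show (∑ k, (star (c k ℓ) * M k ℓ + c k ℓ * M ℓ k))
        = ((∑ k, (L ℓ - L k) * (2 * Complex.normSq (c k ℓ)) : ℝ) : ℂ) by
      push_cast
      exact Finset.sum_congr rfl fun k _ => by rw [key k ℓ]; push_cast; ring]
    rw [← Complex.ofReal_mul, Complex.ofReal_re, Finset.mul_sum]
  rw [hsum]
  -- symmetrize
  have hsymm : ∀ k ℓ, Complex.normSq (c ℓ k) = Complex.normSq (c k ℓ) := by
    intro k ℓ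
    have : c ℓ k = - star (c k ℓ) := by simpa using congrArg star (ha k ℓ)
    rw [this, Complex.star_def]
    simp [Complex.normSq_conj]
  set f : Fin n → Fin n → ℝ := fun ℓ k => F (L ℓ) * ((L ℓ - L k) * (2 * Complex.normSq (c k ℓ))) with hf
  have hswap : (∑ ℓ, ∑ k, f ℓ k) = ∑ ℓ, ∑ k, f k ℓ := Finset.sum_comm
  have h2 : 0 ≤ (∑ ℓ, ∑ k, f ℓ k) + (∑ ℓ, ∑ k, f k ℓ) := by
    rw [← Finset.sum_add_distrib]
    refine Finset.sum_nonneg fun ℓ _ => ?_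
    rw [← Finset.sum_add_distrib]
    refine Finset.sum_nonneg fun k _ => ?_
    have : f ℓ k + f k ℓ
        = (F (L ℓ) - F (L k)) * (L ℓ - L k) * (2 * Complex.normSq (c k ℓ)) := by
      rw [hf]; simp only; rw [hsymm k ℓ]; ring
    rw [this]
    have h3 : 0 ≤ (F (L ℓ) - F (L k)) * (L ℓ - L k) := by
      rcases le_total (L k) (L ℓ) with h | h
      · nlinarith [hF h]
      · have := hF h; nlinarith
    have : (0:ℝ) ≤ 2 * Complex.normSq (c k ℓ) := by nlinarith [Complex.normSq_nonneg (c k ℓ)]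
    exact mul_nonneg h3 this
  linarith [hswap ▸ h2]

lemma stmt17_complete (n : ℕ) (V : Fin n → Fin n → ℂ)
    (horthV : ∀ k ℓ, (∑ i, star (V k i) * V ℓ i) = if k = ℓ then 1 else 0) :
    ∀ (x : Fin n → ℂ) (j : Fin n), ∑ k, (∑ i, star (V k i) * x i) * V k j = x j := by
  set U : Matrix (Fin n) (Fin n) ℂ := Matrix.of fun i k => V k i with hU
  have h1 : Uᴴ * U = 1 := by
    ext k ℓ
    simpa [Matrix.mul_apply, Matrix.conjTranspose_apply, hU, Matrix.one_apply] using horthV k ℓ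
  have h2 : U * Uᴴ = 1 := mul_eq_one_comm.mp h1
  intro x j
  calc ∑ k, (∑ i, star (V k i) * x i) * V k j
      = ∑ k, ∑ i, star (V k i) * x i * V k j := by
        simp [Finset.sum_mul]
    _ = ∑ i, ∑ k, star (V k i) * x i * V k j := Finset.sum_comm
    _ = ∑ i, (U * Uᴴ) j i * x i := by
        refine Finset.sum_congr rfl fun i _ => ?_
        simp only [Matrix.mul_apply, Matrix.conjTranspose_apply, hU, Matrix.of_apply,
          Finset.sum_mul]
        exact Finset.sum_congr rfl fun k _ => by ring
    _ = x j := by rw [h2]; simp [Matrix.one_apply]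

lemma stmt17_triple {a b c : ℝ → ℂ} {a' b' c' : ℂ} {x : ℝ}
    (ha : HasDerivAt a a' x) (hb : HasDerivAt b b' x) (hc : HasDerivAt c c' x) :
    HasDerivAt (fun t => a t * b t * c t)
      (a' * b x * c x + a x * b' * c x + a x * b x * c') x := by
  have := (ha.fun_mul hb).fun_mul hc
  exact this.congr_deriv (by ring)


/-- trace inequality for second-order perturbations.  Let `H(ω)` be a
real-analytic family of Hermitian matrices with real-analytic eigenvalues `λ_ℓ(ω)` and
orthonormal eigenvectors `v_ℓ(ω)`, and let `F` be nondecreasing and nonnegative.  Then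
`Tr((∂²_ω H) F(H)) ≤ Σ_ℓ (∂²_ω λ_ℓ) F(λ_ℓ)`, where (by the spectral decomposition
`F(H) = Σ_ℓ F(λ_ℓ) |v_ℓ⟩⟨v_ℓ|`) the left side equals
`Σ_ℓ F(λ_ℓ) ⟨v_ℓ, (∂²_ω H) v_ℓ⟩`. -/
theorem stmt17 (n : ℕ) (H : ℝ → Matrix (Fin n) (Fin n) ℂ)
    (lam : Fin n → ℝ → ℝ) (v : Fin n → ℝ → (Fin n → ℂ)) (F : ℝ → ℝ)
    (hherm : ∀ ω, (H ω).IsHermitian)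
    (hH : ∀ i j, AnalyticOn ℝ (fun ω => H ω i j) Set.univ)
    (hlam : ∀ ℓ, AnalyticOn ℝ (lam ℓ) Set.univ)
    (hv : ∀ ℓ i, AnalyticOn ℝ (fun ω => v ℓ ω i) Set.univ)
    (heig : ∀ ω ℓ, (H ω).mulVec (v ℓ ω) = lam ℓ ω • v ℓ ω)
    (horth : ∀ ω k ℓ, star (v k ω) ⬝ᵥ v ℓ ω = if k = ℓ then 1 else 0)
    (hF : Monotone F) (hF0 : ∀ x, 0 ≤ F x) (ω : ℝ) :
    (∑ ℓ, (F (lam ℓ ω) : ℂ) *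
        (star (v ℓ ω) ⬝ᵥ
          (Matrix.of fun i j => deriv (deriv (fun t => H t i j)) ω).mulVec (v ℓ ω))).re
      ≤ ∑ ℓ, deriv (deriv (lam ℓ)) ω * F (lam ℓ ω) := by
  classical
  -- basic differentiability
  have hvD : ∀ ℓ i t, HasDerivAt (fun s => v ℓ s i) (deriv (fun s => v ℓ s i) t) t :=
    fun ℓ i t => ((analyticOn_univ.mp (hv ℓ i)) t trivial).differentiableAt.hasDerivAt
  have hHD : ∀ i j t, HasDerivAt (fun s => H s i j) (deriv (fun s => H s i j) t) t :=
    fun i j t => ((analyticOn_univ.mp (hH i j)) t trivial).differentiableAt.hasDerivAt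
  have hHD2 : ∀ i j, HasDerivAt (deriv (fun s => H s i j))
      (deriv (deriv (fun s => H s i j)) ω) ω :=
    fun i j => (((analyticOn_univ.mp (hH i j)).deriv) ω trivial).differentiableAt.hasDerivAt
  have hlamD : ∀ ℓ t, HasDerivAt (lam ℓ) (deriv (lam ℓ) t) t :=
    fun ℓ t => ((analyticOn_univ.mp (hlam ℓ)) t trivial).differentiableAt.hasDerivAt
  have hlamD2 : ∀ ℓ, HasDerivAt (deriv (lam ℓ)) (deriv (deriv (lam ℓ)) ω) ω :=
    fun ℓ => (((analyticOn_univ.mp (hlam ℓ)).deriv) ω trivial).differentiableAt.hasDerivAt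
  -- orthonormality as sums
  have horthS : ∀ t k ℓ, (∑ i, star (v k t i) * v ℓ t i) = if k = ℓ then 1 else 0 :=
    fun t k ℓ => by simpa [dotProduct] using horth t k ℓ
  -- eigen equation componentwise
  have heigS : ∀ t ℓ j, (∑ m, H t j m * v ℓ t m) = (lam ℓ t : ℂ) * v ℓ t j := by
    intro t ℓ j
    have := congrFun (heig t ℓ) j
    simpa [Matrix.mulVec, dotProduct, Complex.real_smul] using this
  -- hermitian row identity
  have hrow : ∀ t k (j : Fin n), (∑ i, star (v k t i) * H t i j)
      = (lam k t : ℂ) * star (v k t j) := by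
    intro t k j
    have hsym : ∀ i, star (H t i j) = H t j i := by
      intro i
      have := hherm t
      rw [Matrix.IsHermitian] at this
      calc star (H t i j) = (H t)ᴴ j i := rfl
        _ = H t j i := by rw [this]
    calc (∑ i, star (v k t i) * H t i j)
        = star (∑ i, star (H t i j) * v k t i) := by
          simp [star_sum, star_mul', mul_comm]
      _ = star (∑ i, H t j i * v k t i) := by
          congr 1; exact Finset.sum_congr rfl fun i _ => by rw [hsym i]
      _ = star ((lam k t : ℂ) * v k t j) := by rw [heigS t k j]
      _ = (lam k t : ℂ) * star (v k t j) := by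
          simp [star_mul', mul_comm, Complex.star_def, Complex.conj_ofReal]
  -- derivative of orthonormality
  have horthD : ∀ t k ℓ, (∑ i, (star (deriv (fun s => v k s i) t) * v ℓ t i
      + star (v k t i) * deriv (fun s => v ℓ s i) t)) = 0 := by
    intro t k ℓ
    have h2 : HasDerivAt (fun s => ∑ i, star (v k s i) * v ℓ s i)
        (∑ i, (star (deriv (fun s => v k s i) t) * v ℓ t i
          + star (v k t i) * deriv (fun s => v ℓ s i) t)) t :=
      HasDerivAt.fun_sum fun i _ => ((hvD k i t).star.fun_mul (hvD ℓ i t))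
    have h3 : HasDerivAt (fun s : ℝ => ∑ i, star (v k s i) * v ℓ s i) 0 t :=
      (hasDerivAt_const t (if k = ℓ then (1:ℂ) else 0)).congr_of_eventuallyEq
        (Filter.Eventually.of_forall fun s => horthS s k ℓ)
    exact (h3.unique h2).symm
  -- Feynman-Hellmann: first derivative of eigenvalue
  have hFH : ∀ ℓ t, ((deriv (lam ℓ) t : ℝ) : ℂ)
      = ∑ i, ∑ j, star (v ℓ t i) * deriv (fun s => H s i j) t * v ℓ t j := by
    intro ℓ t
    -- the quadratic form equals the eigenvalue
    have hg : ∀ s, (∑ i, ∑ j, star (v ℓ s i) * H s i j * v ℓ s j) = ((lam ℓ s : ℝ) : ℂ) := by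
      intro s
      calc (∑ i, ∑ j, star (v ℓ s i) * H s i j * v ℓ s j)
          = ∑ i, star (v ℓ s i) * ∑ j, H s i j * v ℓ s j := by
            refine Finset.sum_congr rfl fun i _ => ?_
            rw [Finset.mul_sum]
            exact Finset.sum_congr rfl fun j _ => by ring
        _ = ∑ i, star (v ℓ s i) * ((lam ℓ s : ℂ) * v ℓ s i) := by
            refine Finset.sum_congr rfl fun i _ => ?_
            rw [heigS s ℓ i]
        _ = (lam ℓ s : ℂ) * ∑ i, star (v ℓ s i) * v ℓ s i := by
            rw [Finset.mul_sum]
            exact Finset.sum_congr rfl fun i _ => by ring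
        _ = ((lam ℓ s : ℝ) : ℂ) := by rw [horthS s ℓ ℓ]; simp
    have hg' : HasDerivAt (fun s => ∑ i, ∑ j, star (v ℓ s i) * H s i j * v ℓ s j)
        (∑ i, ∑ j, (star (deriv (fun s => v ℓ s i) t) * H t i j * v ℓ t j
          + star (v ℓ t i) * deriv (fun s => H s i j) t * v ℓ t j
          + star (v ℓ t i) * H t i j * deriv (fun s => v ℓ s j) t)) t :=
      HasDerivAt.fun_sum fun i _ => HasDerivAt.fun_sum fun j _ =>
        stmt17_triple (hvD ℓ i t).star (hHD i j t) (hvD ℓ j t)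
    have hg2 : HasDerivAt (fun s => ∑ i, ∑ j, star (v ℓ s i) * H s i j * v ℓ s j)
        ((deriv (lam ℓ) t : ℝ) : ℂ) t :=
      ((hlamD ℓ t).ofReal_comp).congr_of_eventuallyEq
        (Filter.Eventually.of_forall fun s => hg s)
    have key := hg2.unique hg'
    -- split the three terms
    rw [key]
    have hsplit : (∑ i, ∑ j, (star (deriv (fun s => v ℓ s i) t) * H t i j * v ℓ t j
          + star (v ℓ t i) * deriv (fun s => H s i j) t * v ℓ t j
          + star (v ℓ t i) * H t i j * deriv (fun s => v ℓ s j) t))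
        = (∑ i, ∑ j, star (deriv (fun s => v ℓ s i) t) * H t i j * v ℓ t j)
        + (∑ i, ∑ j, star (v ℓ t i) * deriv (fun s => H s i j) t * v ℓ t j)
        + (∑ i, ∑ j, star (v ℓ t i) * H t i j * deriv (fun s => v ℓ s j) t) := by
      rw [← Finset.sum_add_distrib, ← Finset.sum_add_distrib]
      exact Finset.sum_congr rfl fun i _ => by
        rw [← Finset.sum_add_distrib, ← Finset.sum_add_distrib]
    rw [hsplit]
    -- T1 = lam * ∑ star(vd) v,  T3 = lam * ∑ star(v) vd,  T1 + T3 = 0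
    have hT1 : (∑ i, ∑ j, star (deriv (fun s => v ℓ s i) t) * H t i j * v ℓ t j)
        = (lam ℓ t : ℂ) * ∑ i, star (deriv (fun s => v ℓ s i) t) * v ℓ t i := by
      rw [Finset.mul_sum]
      refine Finset.sum_congr rfl fun i _ => ?_
      calc (∑ j, star (deriv (fun s => v ℓ s i) t) * H t i j * v ℓ t j)
          = star (deriv (fun s => v ℓ s i) t) * ∑ j, H t i j * v ℓ t j := by
            rw [Finset.mul_sum]; exact Finset.sum_congr rfl fun j _ => by ring
        _ = _ := by rw [heigS t ℓ i]; ring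
    have hT3 : (∑ i, ∑ j, star (v ℓ t i) * H t i j * deriv (fun s => v ℓ s j) t)
        = (lam ℓ t : ℂ) * ∑ j, star (v ℓ t j) * deriv (fun s => v ℓ s j) t := by
      rw [Finset.sum_comm, Finset.mul_sum]
      refine Finset.sum_congr rfl fun j _ => ?_
      calc (∑ i, star (v ℓ t i) * H t i j * deriv (fun s => v ℓ s j) t)
          = (∑ i, star (v ℓ t i) * H t i j) * deriv (fun s => v ℓ s j) t := by
            rw [Finset.sum_mul]
        _ = _ := by rw [hrow t ℓ j]; ring
    have hzero : (lam ℓ t : ℂ) * ∑ i, star (deriv (fun s => v ℓ s i) t) * v ℓ t i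
        + (lam ℓ t : ℂ) * ∑ j, star (v ℓ t j) * deriv (fun s => v ℓ s j) t = 0 := by
      rw [← mul_add, ← Finset.sum_add_distrib, horthD t ℓ ℓ, mul_zero]
    rw [hT1, hT3]
    linear_combination hzero
  -- second derivative identity at ω
  have hsec : ∀ ℓ, ((deriv (deriv (lam ℓ)) ω : ℝ) : ℂ)
      = (∑ i, ∑ j, star (deriv (fun s => v ℓ s i) ω) * deriv (fun s => H s i j) ω * v ℓ ω j)
      + (∑ i, ∑ j, star (v ℓ ω i) * deriv (deriv (fun s => H s i j)) ω * v ℓ ω j)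
      + (∑ i, ∑ j, star (v ℓ ω i) * deriv (fun s => H s i j) ω * deriv (fun s => v ℓ s j) ω) := by
    intro ℓ
    have hφ' : HasDerivAt
        (fun t => ∑ i, ∑ j, star (v ℓ t i) * deriv (fun s => H s i j) t * v ℓ t j)
        (∑ i, ∑ j, (star (deriv (fun s => v ℓ s i) ω) * deriv (fun s => H s i j) ω * v ℓ ω j
          + star (v ℓ ω i) * deriv (deriv (fun s => H s i j)) ω * v ℓ ω j
          + star (v ℓ ω i) * deriv (fun s => H s i j) ω * deriv (fun s => v ℓ s j) ω)) ω :=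
      HasDerivAt.fun_sum fun i _ => HasDerivAt.fun_sum fun j _ =>
        stmt17_triple (hvD ℓ i ω).star (hHD2 i j) (hvD ℓ j ω)
    have hφ2 : HasDerivAt
        (fun t => ∑ i, ∑ j, star (v ℓ t i) * deriv (fun s => H s i j) t * v ℓ t j)
        ((deriv (deriv (lam ℓ)) ω : ℝ) : ℂ) ω :=
      ((hlamD2 ℓ).ofReal_comp).congr_of_eventuallyEq
        (Filter.Eventually.of_forall fun t => (hFH ℓ t).symm)
    have key := hφ2.unique hφ'
    rw [key, ← Finset.sum_add_distrib, ← Finset.sum_add_distrib]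
    refine Finset.sum_congr rfl fun i _ => ?_
    rw [← Finset.sum_add_distrib, ← Finset.sum_add_distrib]
  -- derivative of eigen equation at ω
  have heigD : ∀ ℓ j, (∑ m, (deriv (fun s => H s j m) ω * v ℓ ω m
        + H ω j m * deriv (fun s => v ℓ s m) ω))
      = ((deriv (lam ℓ) ω : ℝ) : ℂ) * v ℓ ω j + ((lam ℓ ω : ℝ) : ℂ) * deriv (fun s => v ℓ s j) ω := by
    intro ℓ j
    have h1 : HasDerivAt (fun s => ∑ m, H s j m * v ℓ s m)
        (∑ m, (deriv (fun s => H s j m) ω * v ℓ ω m + H ω j m * deriv (fun s => v ℓ s m) ω)) ω :=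
      HasDerivAt.fun_sum fun m _ => (hHD j m ω).fun_mul (hvD ℓ m ω)
    have h2 : HasDerivAt (fun s => ∑ m, H s j m * v ℓ s m)
        (((deriv (lam ℓ) ω : ℝ) : ℂ) * v ℓ ω j + ((lam ℓ ω : ℝ) : ℂ) * deriv (fun s => v ℓ s j) ω) ω :=
      (((hlamD ℓ ω).ofReal_comp).mul (hvD ℓ j ω)).congr_of_eventuallyEq
        (Filter.Eventually.of_forall fun s => heigS s ℓ j)
    exact (h2.unique h1).symm
  -- now pure algebra at ω
  set c : Fin n → Fin n → ℂ :=
    fun k ℓ => ∑ i, star (v k ω i) * deriv (fun s => v ℓ s i) ω with hc_def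
  set M : Fin n → Fin n → ℂ :=
    fun k ℓ => ∑ i, ∑ j, star (v k ω i) * deriv (fun s => H s i j) ω * v ℓ ω j with hM_def
  -- (a) antisymmetry
  have ha : ∀ k ℓ, star (c ℓ k) = - c k ℓ := by
    intro k ℓ
    have h0 := horthD ω k ℓ
    rw [Finset.sum_add_distrib] at h0
    have h1 : (∑ i, star (deriv (fun s => v k s i) ω) * v ℓ ω i) = star (c ℓ k) := by
      rw [hc_def]
      simp only [star_sum, star_mul', star_star]
      exact Finset.sum_congr rfl fun i _ => by ring
    rw [h1] at h0
    linear_combination h0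
  -- (b) matrix elements of H'
  have hb : ∀ k ℓ, M k ℓ = (if k = ℓ then ((deriv (lam ℓ) ω : ℝ) : ℂ) else 0)
      + (((lam ℓ ω : ℝ) : ℂ) - ((lam k ω : ℝ) : ℂ)) * c k ℓ := by
    intro k ℓ
    have h0 : (∑ j, star (v k ω j) * (∑ m, (deriv (fun s => H s j m) ω * v ℓ ω m
          + H ω j m * deriv (fun s => v ℓ s m) ω)))
        = ∑ j, star (v k ω j) * (((deriv (lam ℓ) ω : ℝ) : ℂ) * v ℓ ω j
          + ((lam ℓ ω : ℝ) : ℂ) * deriv (fun s => v ℓ s j) ω) :=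
      Finset.sum_congr rfl fun j _ => by rw [heigD ℓ j]
    -- expand LHS of h0
    have hL : (∑ j, star (v k ω j) * (∑ m, (deriv (fun s => H s j m) ω * v ℓ ω m
          + H ω j m * deriv (fun s => v ℓ s m) ω)))
        = M k ℓ + ((lam k ω : ℝ) : ℂ) * c k ℓ := by
      have e1 : ∀ j, star (v k ω j) * (∑ m, (deriv (fun s => H s j m) ω * v ℓ ω m
            + H ω j m * deriv (fun s => v ℓ s m) ω))
          = (∑ m, star (v k ω j) * deriv (fun s => H s j m) ω * v ℓ ω m)
          + (∑ m, star (v k ω j) * H ω j m * deriv (fun s => v ℓ s m) ω) := by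
        intro j
        rw [Finset.mul_sum, ← Finset.sum_add_distrib]
        exact Finset.sum_congr rfl fun m _ => by ring
      rw [Finset.sum_congr rfl fun j _ => e1 j, Finset.sum_add_distrib]
      congr 1
      -- second piece: ∑ j ∑ m star(vk j) H j m vd m = lam k * c k ℓ
      rw [Finset.sum_comm, hc_def]
      simp only
      rw [Finset.mul_sum]
      refine Finset.sum_congr rfl fun m _ => ?_
      calc (∑ j, star (v k ω j) * H ω j m * deriv (fun s => v ℓ s m) ω)
          = (∑ j, star (v k ω j) * H ω j m) * deriv (fun s => v ℓ s m) ω := by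
            rw [Finset.sum_mul]
        _ = ((lam k ω : ℝ) : ℂ) * (star (v k ω m) * deriv (fun s => v ℓ s m) ω) := by
            rw [hrow ω k m]; ring
    -- expand RHS of h0
    have hR : (∑ j, star (v k ω j) * (((deriv (lam ℓ) ω : ℝ) : ℂ) * v ℓ ω j
          + ((lam ℓ ω : ℝ) : ℂ) * deriv (fun s => v ℓ s j) ω))
        = (if k = ℓ then ((deriv (lam ℓ) ω : ℝ) : ℂ) else 0) + ((lam ℓ ω : ℝ) : ℂ) * c k ℓ := by
      have e2 : ∀ j, star (v k ω j) * (((deriv (lam ℓ) ω : ℝ) : ℂ) * v ℓ ω j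
            + ((lam ℓ ω : ℝ) : ℂ) * deriv (fun s => v ℓ s j) ω)
          = ((deriv (lam ℓ) ω : ℝ) : ℂ) * (star (v k ω j) * v ℓ ω j)
            + ((lam ℓ ω : ℝ) : ℂ) * (star (v k ω j) * deriv (fun s => v ℓ s j) ω) := by
        intro j; ring
      rw [Finset.sum_congr rfl fun j _ => e2 j, Finset.sum_add_distrib,
        ← Finset.mul_sum, ← Finset.mul_sum, horthS ω k ℓ, hc_def]
      by_cases h : k = ℓ <;> simp [h]
    rw [hL, hR] at h0
    linear_combination h0
  -- completeness expansion of the eigenvector derivative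
  have hcomp := stmt17_complete n (fun ℓ i => v ℓ ω i) (fun k ℓ => horthS ω k ℓ)
  have hVd : ∀ ℓ j, deriv (fun s => v ℓ s j) ω = ∑ k, c k ℓ * v k ω j := by
    intro ℓ j
    have := hcomp (fun i => deriv (fun s => v ℓ s i) ω) j
    rw [← this, hc_def]
  -- A ℓ = ∑ k star (c k ℓ) * M k ℓ
  have hA : ∀ ℓ, (∑ i, ∑ j, star (deriv (fun s => v ℓ s i) ω)
        * deriv (fun s => H s i j) ω * v ℓ ω j)
      = ∑ k, star (c k ℓ) * M k ℓ := by
    intro ℓ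
    calc (∑ i, ∑ j, star (deriv (fun s => v ℓ s i) ω) * deriv (fun s => H s i j) ω * v ℓ ω j)
        = ∑ i, ∑ j, (∑ k, star (c k ℓ) * star (v k ω i)) * deriv (fun s => H s i j) ω * v ℓ ω j := by
          refine Finset.sum_congr rfl fun i _ => Finset.sum_congr rfl fun j _ => ?_
          rw [hVd ℓ i]
          have hst : star (∑ k, c k ℓ * v k ω i) = ∑ k, star (c k ℓ) * star (v k ω i) := by
            simp only [star_sum, star_mul']
            try exact Finset.sum_congr rfl fun k _ => by ring
          rw [hst]
      _ = ∑ i, ∑ j, ∑ k, star (c k ℓ) * (star (v k ω i) * deriv (fun s => H s i j) ω * v ℓ ω j) := by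
          refine Finset.sum_congr rfl fun i _ => Finset.sum_congr rfl fun j _ => ?_
          rw [Finset.sum_mul, Finset.sum_mul]
          exact Finset.sum_congr rfl fun k _ => by ring
      _ = ∑ k, ∑ i, ∑ j, star (c k ℓ) * (star (v k ω i) * deriv (fun s => H s i j) ω * v ℓ ω j) := by
          rw [show (∑ i, ∑ j, ∑ k, star (c k ℓ) * (star (v k ω i) * deriv (fun s => H s i j) ω * v ℓ ω j))
              = ∑ i, ∑ k, ∑ j, star (c k ℓ) * (star (v k ω i) * deriv (fun s => H s i j) ω * v ℓ ω j)
            from Finset.sum_congr rfl fun i _ => Finset.sum_comm]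
          exact Finset.sum_comm
      _ = ∑ k, star (c k ℓ) * M k ℓ := by
          refine Finset.sum_congr rfl fun k _ => ?_
          simp only [hM_def, Finset.mul_sum]
  -- B ℓ = ∑ k c k ℓ * M ℓ k
  have hB : ∀ ℓ, (∑ i, ∑ j, star (v ℓ ω i)
        * deriv (fun s => H s i j) ω * deriv (fun s => v ℓ s j) ω)
      = ∑ k, c k ℓ * M ℓ k := by
    intro ℓ
    calc (∑ i, ∑ j, star (v ℓ ω i) * deriv (fun s => H s i j) ω * deriv (fun s => v ℓ s j) ω)
        = ∑ i, ∑ j, ∑ k, c k ℓ * (star (v ℓ ω i) * deriv (fun s => H s i j) ω * v k ω j) := by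
          refine Finset.sum_congr rfl fun i _ => Finset.sum_congr rfl fun j _ => ?_
          rw [hVd ℓ j, Finset.mul_sum]
          exact Finset.sum_congr rfl fun k _ => by ring
      _ = ∑ k, ∑ i, ∑ j, c k ℓ * (star (v ℓ ω i) * deriv (fun s => H s i j) ω * v k ω j) := by
          rw [show (∑ i, ∑ j, ∑ k, c k ℓ * (star (v ℓ ω i) * deriv (fun s => H s i j) ω * v k ω j))
              = ∑ i, ∑ k, ∑ j, c k ℓ * (star (v ℓ ω i) * deriv (fun s => H s i j) ω * v k ω j)
            from Finset.sum_congr rfl fun i _ => Finset.sum_comm]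
          exact Finset.sum_comm
      _ = ∑ k, c k ℓ * M ℓ k := by
          refine Finset.sum_congr rfl fun k _ => ?_
          simp only [hM_def, Finset.mul_sum]
  -- assemble
  have halg := stmt17_alg n (fun ℓ => lam ℓ ω) (fun ℓ => deriv (lam ℓ) ω) F hF c M ha hb
  have hT : ∀ ℓ, (star (v ℓ ω) ⬝ᵥ
        (Matrix.of fun i j => deriv (deriv (fun t => H t i j)) ω).mulVec (v ℓ ω))
      = ∑ i, ∑ j, star (v ℓ ω i) * deriv (deriv (fun s => H s i j)) ω * v ℓ ω j := by
    intro ℓ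
    simp [dotProduct, Matrix.mulVec, Matrix.of_apply, Finset.mul_sum, mul_assoc]
  have hdecomp : ∀ ℓ, deriv (deriv (lam ℓ)) ω
      = (∑ i, ∑ j, star (v ℓ ω i) * deriv (deriv (fun s => H s i j)) ω * v ℓ ω j).re
        + (∑ k, (star (c k ℓ) * M k ℓ + c k ℓ * M ℓ k)).re := by
    intro ℓ
    have h1 := hsec ℓ
    rw [hA ℓ, hB ℓ] at h1
    have h2 := congrArg Complex.re h1
    rw [Complex.ofReal_re] at h2
    rw [h2, Finset.sum_add_distrib, Complex.add_re, Complex.add_re, Complex.add_re]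
    ring
  have hLHS : (∑ ℓ, ((F (lam ℓ ω) : ℝ) : ℂ) *
        (star (v ℓ ω) ⬝ᵥ
          (Matrix.of fun i j => deriv (deriv (fun t => H t i j)) ω).mulVec (v ℓ ω))).re
      = ∑ ℓ, F (lam ℓ ω)
          * (∑ i, ∑ j, star (v ℓ ω i) * deriv (deriv (fun s => H s i j)) ω * v ℓ ω j).re := by
    rw [Complex.re_sum]
    exact Finset.sum_congr rfl fun ℓ _ => by rw [hT ℓ, Complex.re_ofReal_mul]
  have hS : (∑ ℓ, F (lam ℓ ω) * (∑ k, (star (c k ℓ) * M k ℓ + c k ℓ * M ℓ k)).re)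
      = (∑ ℓ, ((F (lam ℓ ω) : ℝ) : ℂ) * ∑ k, (star (c k ℓ) * M k ℓ + c k ℓ * M ℓ k)).re := by
    rw [Complex.re_sum]
    exact Finset.sum_congr rfl fun ℓ _ => by rw [Complex.re_ofReal_mul]
  have hRHS : (∑ ℓ, deriv (deriv (lam ℓ)) ω * F (lam ℓ ω))
      = (∑ ℓ, F (lam ℓ ω)
          * (∑ i, ∑ j, star (v ℓ ω i) * deriv (deriv (fun s => H s i j)) ω * v ℓ ω j).re)
        + ∑ ℓ, F (lam ℓ ω) * (∑ k, (star (c k ℓ) * M k ℓ + c k ℓ * M ℓ k)).re := by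
    rw [← Finset.sum_add_distrib]
    refine Finset.sum_congr rfl fun ℓ _ => ?_
    rw [hdecomp ℓ]
    ring
  rw [hLHS, hRHS]
  rw [hS] at *
  linarith [halg, hS]
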